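/- arXiv:1310.0981 — 3 statements merged into one kernel-verified Lean document; each statement's English description precedes it below -/
import Mathlib

section
/- Let m ≥ 1 and α ∈ ℂ. Let f : ℝ × ℤ → ℂ be differentiable in the time variable; define g(t,n) = ∏_{s=1}^{m−1} f(t,n+s) − α and G(t,n) = ∏_{s=0}^{m} f(t,n+s) − α, and assume G(t,n) ≠ 0 for all t, n. Suppose f satisfies ∂_t f(t,n) = f(t,n)·(∏_{s=1}^{m−1} g(t,n−s))/(∏_{s=0}^{m} G(t,n−s))·(g(t,n)·g(t,n−m)·(G(t,n) − G(t,n−m)) − G(t,n)·G(t,n−m)·(g(t,n) − g(t,n−m))) for all t, n. Then the function ũ(t,n) := g(t,n)·f(t,n+m)/G(t,n) satisfies ∂_t ũ(t,n) = ũ(t,n)²·(∏_{s=1}^{m} ũ(t,n+s) − ∏_{s=1}^{m} ũ(t,n−s)) − ũ(t,n)·(∏_{s=1}^{m−1} ũ(t,n+s) − ∏_{s=1}^{m−1} ũ(t,n−s)) for all t, n. -/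
open Finset

/-- descending window product rewritten as ascending -/
private lemma prod_desc (F : ℤ → ℂ) (N : ℕ) (a : ℤ) :
    (∏ s ∈ Finset.range N, F (a - s)) = ∏ s ∈ Finset.range N, F (a - N + 1 + s) := by
  rw [← Finset.prod_range_reflect (fun j => F (a - N + 1 + j)) N]
  refine Finset.prod_congr rfl fun s hs => ?_
  have hs' := Finset.mem_range.mp hs
  congr 1
  omega

noncomputable def PP (m' : ℕ) (F : ℤ → ℂ) (k : ℤ) : ℂ := ∏ s ∈ Finset.range m', F (k + s + 1)
noncomputable def QQ (m' : ℕ) (F : ℤ → ℂ) (k : ℤ) : ℂ :=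
  ∏ s ∈ Finset.range (m' + 1 + 1), F (k + s)
noncomputable def WW (m' : ℕ) (gg : ℤ → ℂ) (k : ℤ) : ℂ := ∏ s ∈ Finset.range m', gg (k - s - 1)
noncomputable def ZZ (m' : ℕ) (GG : ℤ → ℂ) (k : ℤ) : ℂ :=
  ∏ s ∈ Finset.range (m' + 1 + 1), GG (k - s)
noncomputable def PH (m' : ℕ) (gg : ℤ → ℂ) (k : ℤ) : ℂ := ∏ s ∈ Finset.range (m' + 1), gg (k - s)
noncomputable def PS (m' : ℕ) (GG : ℤ → ℂ) (k : ℤ) : ℂ := ∏ s ∈ Finset.range (m' + 1), GG (k - s)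
noncomputable def BB (m' : ℕ) (gg GG : ℤ → ℂ) (k : ℤ) : ℂ :=
  gg k * gg (k - ((m' : ℤ) + 1)) * (GG k - GG (k - ((m' : ℤ) + 1)))
    - GG k * GG (k - ((m' : ℤ) + 1)) * (gg k - gg (k - ((m' : ℤ) + 1)))
noncomputable def EE (m' : ℕ) (gg GG : ℤ → ℂ) (k : ℤ) : ℂ :=
  WW m' gg k / ZZ m' GG k * BB m' gg GG k
noncomputable def TT (m' : ℕ) (α : ℂ) (F gg GG : ℤ → ℂ) (k : ℤ) : ℂ :=
  -(PH m' gg (k - 1) * (PP m' F k * QQ m' F (k - ((m' : ℤ) + 1)) - α ^ 2) / PS m' GG (k - 1))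
noncomputable def MM (m' : ℕ) (F gg GG : ℤ → ℂ) (k : ℤ) : ℂ :=
  WW m' gg k * (gg (k - ((m' : ℤ) + 1)) * gg k * QQ m' F k
    - GG (k - ((m' : ℤ) + 1)) * GG k * PP m' F k) / ZZ m' GG k

section lemmas
variable (m' : ℕ) (F gg GG : ℤ → ℂ)

lemma hPQ (k : ℤ) : QQ m' F k = F k * PP m' F k * F (k + ((m' : ℤ) + 1)) := by
  rw [QQ, Finset.prod_range_succ', Finset.prod_range_succ]
  have h1 : (∏ s ∈ Finset.range m', F (k + (s + 1 : ℕ))) = PP m' F k := by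
    refine Finset.prod_congr rfl fun s hs => ?_
    congr 1; push_cast; ring
  rw [h1]
  have h2 : (k : ℤ) + ((m' + 1 : ℕ) : ℤ) = k + ((m' : ℤ) + 1) := by push_cast; ring
  have h3 : (k : ℤ) + ((0 : ℕ) : ℤ) = k := by push_cast; ring
  rw [h2, h3]; ring

lemma hwin (k : ℤ) :
    PP m' F (k + 1) * QQ m' F (k + 1 - ((m' : ℤ) + 1))
      = PP m' F (k - ((m' : ℤ) + 1)) * QQ m' F k := by
  have h1 := Finset.prod_range_add (fun s : ℕ => F (k - m' + s)) (m' + 1 + 1) m'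
  have h2 := Finset.prod_range_add (fun s : ℕ => F (k - m' + s)) m' (m' + 1 + 1)
  have e1 : QQ m' F (k + 1 - ((m' : ℤ) + 1)) = ∏ s ∈ Finset.range (m' + 1 + 1), F (k - m' + s) := by
    refine Finset.prod_congr rfl fun s hs => ?_; congr 1; omega
  have e2 : PP m' F (k + 1) = ∏ s ∈ Finset.range m', F (k - m' + ((m' + 1 + 1 : ℕ) + s : ℕ)) := by
    refine Finset.prod_congr rfl fun s hs => ?_; congr 1; omega
  have e3 : PP m' F (k - ((m' : ℤ) + 1)) = ∏ s ∈ Finset.range m', F (k - m' + s) := by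
    refine Finset.prod_congr rfl fun s hs => ?_; congr 1; omega
  have e4 : QQ m' F k = ∏ s ∈ Finset.range (m' + 1 + 1), F (k - m' + ((m' : ℕ) + s : ℕ)) := by
    refine Finset.prod_congr rfl fun s hs => ?_; congr 1; omega
  rw [e1, e2, e3, e4, mul_comm]
  rw [← h1]
  rw [show m' + (m' + 1 + 1) = m' + 1 + 1 + m' from by omega] at h2
  rw [← h2]

lemma hPhW (k : ℤ) : PH m' gg k = gg k * WW m' gg k := by
  rw [PH, Finset.prod_range_succ']
  have h1 : (∏ s ∈ Finset.range m', gg (k - (s + 1 : ℕ))) = WW m' gg k := by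
    refine Finset.prod_congr rfl fun s hs => ?_; congr 1; omega
  have h2 : k - ((0 : ℕ) : ℤ) = k := by omega
  rw [h1, h2]; ring

lemma hPhW' (k : ℤ) : PH m' gg (k - 1) = WW m' gg k * gg (k - ((m' : ℤ) + 1)) := by
  rw [PH, Finset.prod_range_succ]
  have h1 : (∏ s ∈ Finset.range m', gg (k - 1 - s)) = WW m' gg k := by
    refine Finset.prod_congr rfl fun s hs => ?_; congr 1; omega
  have h2 : k - 1 - ((m' : ℕ) : ℤ) = k - ((m' : ℤ) + 1) := by omega
  rw [h1, h2]

lemma hZPs (k : ℤ) : ZZ m' GG k = PS m' GG (k - 1) * GG k := by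
  rw [ZZ, Finset.prod_range_succ']
  have h1 : (∏ s ∈ Finset.range (m' + 1), GG (k - (s + 1 : ℕ))) = PS m' GG (k - 1) := by
    refine Finset.prod_congr rfl fun s hs => ?_; congr 1; omega
  have h2 : k - ((0 : ℕ) : ℤ) = k := by omega
  rw [h1, h2]

lemma hZPs' (k : ℤ) : ZZ m' GG k = PS m' GG k * GG (k - ((m' : ℤ) + 1)) := by
  rw [ZZ, Finset.prod_range_succ]
  have h2 : k - ((m' + 1 : ℕ) : ℤ) = k - ((m' : ℤ) + 1) := by omega
  rw [h2]; rfl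

lemma hPS0 (hG0 : ∀ k, GG k ≠ 0) (k : ℤ) : PS m' GG k ≠ 0 :=
  Finset.prod_ne_zero_iff.mpr fun s _ => hG0 _

lemma hZZ0 (hG0 : ∀ k, GG k ≠ 0) (k : ℤ) : ZZ m' GG k ≠ 0 :=
  Finset.prod_ne_zero_iff.mpr fun s _ => hG0 _

end lemmas

section claims
variable (m' : ℕ) (α : ℂ) (F gg GG : ℤ → ℂ)
variable (hg : ∀ k, gg k = PP m' F k - α) (hG : ∀ k, GG k = QQ m' F k - α)
variable (hG0 : ∀ k, GG k ≠ 0)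

include hg hG hG0 in
lemma claimA (k : ℤ) :
    TT m' α F gg GG k - TT m' α F gg GG (k + 1) = -(α * EE m' gg GG k) := by
  have hgP : ∀ j, PP m' F j = gg j + α := fun j => by rw [hg j]; ring
  have hGQ : ∀ j, QQ m' F j = GG j + α := fun j => by rw [hG j]; ring
  have hZ0 := hZZ0 m' GG hG0 k
  have hG0k := hG0 k
  have hG0km := hG0 (k - ((m' : ℤ) + 1))
  have hPS1 : PS m' GG (k - 1) = ZZ m' GG k / GG k := by
    rw [hZPs m' GG k]; field_simp
  have hPS2 : PS m' GG k = ZZ m' GG k / GG (k - ((m' : ℤ) + 1)) := by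
    rw [hZPs' m' GG k]; field_simp
  rw [TT, TT, add_sub_cancel_right, hwin, hPhW', hPhW, hPS1, hPS2, EE, BB]
  rw [hgP k, hgP (k - ((m' : ℤ) + 1)), hGQ k, hGQ (k - ((m' : ℤ) + 1))]
  field_simp
  ring

include hg hG hG0 in
lemma claimB (n : ℤ) :
    (gg n - GG n) * TT m' α F gg GG (n + ((m' : ℤ) + 1))
      = -(α * gg n * EE m' gg GG (n + ((m' : ℤ) + 1)))
        - gg n * GG n * MM m' F gg GG (n + ((m' : ℤ) + 1)) := by
  have hgP : ∀ j, PP m' F j = gg j + α := fun j => by rw [hg j]; ring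
  have hGQ : ∀ j, QQ m' F j = GG j + α := fun j => by rw [hG j]; ring
  have hZ0 := hZZ0 m' GG hG0 (n + ((m' : ℤ) + 1))
  have hG0n := hG0 n
  have hG0m := hG0 (n + ((m' : ℤ) + 1))
  have hPS1 : PS m' GG (n + ((m' : ℤ) + 1) - 1)
      = ZZ m' GG (n + ((m' : ℤ) + 1)) / GG (n + ((m' : ℤ) + 1)) := by
    rw [hZPs m' GG (n + ((m' : ℤ) + 1))]; field_simp
  rw [TT, MM, EE, BB, hPhW', hPS1, add_sub_cancel_right]
  rw [hgP (n + ((m' : ℤ) + 1)), hGQ n, hGQ (n + ((m' : ℤ) + 1))]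
  field_simp
  ring

include hg hG hG0 in
lemma claimC (n : ℤ) :
    (gg n - GG n) * TT m' α F gg GG (n + 1)
      = gg n * QQ m' F n * EE m' gg GG n - gg n * GG n * MM m' F gg GG n := by
  have hgP : ∀ j, PP m' F j = gg j + α := fun j => by rw [hg j]; ring
  have hGQ : ∀ j, QQ m' F j = GG j + α := fun j => by rw [hG j]; ring
  have hZ0 := hZZ0 m' GG hG0 n
  have hG0n := hG0 n
  have hG0m := hG0 (n - ((m' : ℤ) + 1))
  have hPS2 : PS m' GG n = ZZ m' GG n / GG (n - ((m' : ℤ) + 1)) := by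
    rw [hZPs' m' GG n]; field_simp
  rw [TT, MM, EE, BB, add_sub_cancel_right, hwin, hPhW, hPS2]
  rw [hgP n, hgP (n - ((m' : ℤ) + 1)), hGQ n]
  field_simp
  ring

include hg hG hG0 in
lemma htel (n : ℤ) :
    α * (∑ s ∈ Finset.range m', EE m' gg GG (n + s + 1))
      = TT m' α F gg GG (n + ((m' : ℤ) + 1)) - TT m' α F gg GG (n + 1) := by
  have h := Finset.sum_range_sub (fun i : ℕ => TT m' α F gg GG (n + 1 + i)) m'
  calc α * (∑ s ∈ Finset.range m', EE m' gg GG (n + s + 1))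
      = ∑ s ∈ Finset.range m', α * EE m' gg GG (n + s + 1) := Finset.mul_sum _ _ _
    _ = ∑ i ∈ Finset.range m',
          (TT m' α F gg GG (n + 1 + ((i + 1 : ℕ) : ℤ)) - TT m' α F gg GG (n + 1 + (i : ℤ))) := by
        refine Finset.sum_congr rfl fun s _ => ?_
        have hA := claimA m' α F gg GG hg hG hG0 (n + s + 1)
        have e1 : (n : ℤ) + 1 + ((s + 1 : ℕ) : ℤ) = (n + s + 1) + 1 := by push_cast; ring
        have e2 : (n : ℤ) + 1 + (s : ℤ) = n + s + 1 := by ring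
        rw [e1, e2]
        linear_combination hA
    _ = TT m' α F gg GG (n + 1 + ((m' : ℕ) : ℤ)) - TT m' α F gg GG (n + 1 + ((0 : ℕ) : ℤ)) := h
    _ = TT m' α F gg GG (n + ((m' : ℤ) + 1)) - TT m' α F gg GG (n + 1) := by
        rw [show (n : ℤ) + 1 + ((m' : ℕ) : ℤ) = n + ((m' : ℤ) + 1) from by push_cast; ring,
          show (n : ℤ) + 1 + ((0 : ℕ) : ℤ) = n + 1 from by push_cast; ring]

lemma hsplit (n : ℤ) :
    (∑ s ∈ Finset.range (m' + 1 + 1), EE m' gg GG (n + s))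
      = EE m' gg GG n + (∑ s ∈ Finset.range m', EE m' gg GG (n + s + 1))
        + EE m' gg GG (n + ((m' : ℤ) + 1)) := by
  rw [Finset.sum_range_succ, Finset.sum_range_succ']
  have h1 : (∑ s ∈ Finset.range m', EE m' gg GG (n + ((s + 1 : ℕ) : ℤ)))
      = ∑ s ∈ Finset.range m', EE m' gg GG (n + s + 1) := by
    refine Finset.sum_congr rfl fun s _ => ?_; congr 1; push_cast; ring
  have h2 : (n : ℤ) + ((0 : ℕ) : ℤ) = n := by push_cast; ring
  have h3 : (n : ℤ) + ((m' + 1 : ℕ) : ℤ) = n + ((m' : ℤ) + 1) := by push_cast; ring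
  rw [h1, h2, h3]; ring
end claims

section products
variable (m' : ℕ) (F gg GG : ℤ → ℂ)

lemma prodU_plus (n : ℤ) :
    (∏ s ∈ Finset.range (m' + 1),
        gg (n + s + 1) * F (n + s + 1 + ((m' : ℤ) + 1)) / GG (n + s + 1))
      = PH m' gg (n + ((m' : ℤ) + 1))
          * (PP m' F (n + ((m' : ℤ) + 1)) * F (n + ((m' : ℤ) + 1) + ((m' : ℤ) + 1)))
          / PS m' GG (n + ((m' : ℤ) + 1)) := by
  rw [Finset.prod_div_distrib, Finset.prod_mul_distrib]
  have h1 : PH m' gg (n + ((m' : ℤ) + 1)) = ∏ s ∈ Finset.range (m' + 1), gg (n + s + 1) := by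
    rw [PH, prod_desc]
    refine Finset.prod_congr rfl fun s _ => ?_; congr 1; push_cast; ring
  have h2 : (∏ s ∈ Finset.range (m' + 1), F (n + s + 1 + ((m' : ℤ) + 1)))
      = PP m' F (n + ((m' : ℤ) + 1)) * F (n + ((m' : ℤ) + 1) + ((m' : ℤ) + 1)) := by
    rw [Finset.prod_range_succ]
    congr 1
    · rw [PP]; refine Finset.prod_congr rfl fun s _ => ?_; congr 1; push_cast; ring
    · congr 1; push_cast; ring
  have h3 : PS m' GG (n + ((m' : ℤ) + 1)) = ∏ s ∈ Finset.range (m' + 1), GG (n + s + 1) := by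
    rw [PS, prod_desc]
    refine Finset.prod_congr rfl fun s _ => ?_; congr 1; push_cast; ring
  rw [h1, h2, h3]

lemma prodU_minus (n : ℤ) :
    (∏ s ∈ Finset.range (m' + 1),
        gg (n - s - 1) * F (n - s - 1 + ((m' : ℤ) + 1)) / GG (n - s - 1))
      = PH m' gg (n - 1) * (F n * PP m' F n) / PS m' GG (n - 1) := by
  rw [Finset.prod_div_distrib, Finset.prod_mul_distrib]
  have h1 : PH m' gg (n - 1) = ∏ s ∈ Finset.range (m' + 1), gg (n - s - 1) := by
    rw [PH]; refine Finset.prod_congr rfl fun s _ => ?_; congr 1; omega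
  have h2 : (∏ s ∈ Finset.range (m' + 1), F (n - s - 1 + ((m' : ℤ) + 1)))
      = F n * PP m' F n := by
    have e1 : (∏ s ∈ Finset.range (m' + 1), F (n - s - 1 + ((m' : ℤ) + 1)))
        = ∏ s ∈ Finset.range (m' + 1), F (n + ((m' : ℤ) + 1) - 1 - s) := by
      refine Finset.prod_congr rfl fun s _ => ?_; congr 1; omega
    rw [e1, prod_desc, Finset.prod_range_succ']
    have e2 : (∏ s ∈ Finset.range m',
        F (n + ((m' : ℤ) + 1) - 1 - ((m' + 1 : ℕ) : ℤ) + 1 + ((s + 1 : ℕ) : ℤ)))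
        = PP m' F n := by
      rw [PP]; refine Finset.prod_congr rfl fun s _ => ?_; congr 1; push_cast; ring
    rw [e2]
    have e3 : n + ((m' : ℤ) + 1) - 1 - ((m' + 1 : ℕ) : ℤ) + 1 + ((0 : ℕ) : ℤ) = n := by
      push_cast; ring
    rw [e3]; ring
  have h3 : PS m' GG (n - 1) = ∏ s ∈ Finset.range (m' + 1), GG (n - s - 1) := by
    rw [PS]; refine Finset.prod_congr rfl fun s _ => ?_; congr 1; omega
  rw [h1, h2, h3]

lemma prodV_plus (n : ℤ) :
    (∏ s ∈ Finset.range m',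
        gg (n + s + 1) * F (n + s + 1 + ((m' : ℤ) + 1)) / GG (n + s + 1))
      = WW m' gg (n + ((m' : ℤ) + 1)) * PP m' F (n + ((m' : ℤ) + 1))
          / (∏ s ∈ Finset.range m', GG (n + s + 1)) := by
  rw [Finset.prod_div_distrib, Finset.prod_mul_distrib]
  have h1 : WW m' gg (n + ((m' : ℤ) + 1)) = ∏ s ∈ Finset.range m', gg (n + s + 1) := by
    rw [WW]
    have e1 : (∏ s ∈ Finset.range m', gg (n + ((m' : ℤ) + 1) - s - 1))
        = ∏ s ∈ Finset.range m', gg (n + ((m' : ℤ) + 1) - 1 - s) := by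
      refine Finset.prod_congr rfl fun s _ => ?_; congr 1; omega
    rw [e1, prod_desc]
    refine Finset.prod_congr rfl fun s _ => ?_; congr 1; push_cast; ring
  have h2 : (∏ s ∈ Finset.range m', F (n + s + 1 + ((m' : ℤ) + 1)))
      = PP m' F (n + ((m' : ℤ) + 1)) := by
    rw [PP]; refine Finset.prod_congr rfl fun s _ => ?_; congr 1; push_cast; ring
  rw [h1, h2]

lemma prodV_minus (n : ℤ) :
    (∏ s ∈ Finset.range m',
        gg (n - s - 1) * F (n - s - 1 + ((m' : ℤ) + 1)) / GG (n - s - 1))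
      = WW m' gg n * PP m' F n / (∏ s ∈ Finset.range m', GG (n - s - 1)) := by
  rw [Finset.prod_div_distrib, Finset.prod_mul_distrib]
  have h2 : (∏ s ∈ Finset.range m', F (n - s - 1 + ((m' : ℤ) + 1))) = PP m' F n := by
    have e1 : (∏ s ∈ Finset.range m', F (n - s - 1 + ((m' : ℤ) + 1)))
        = ∏ s ∈ Finset.range m', F (n + ((m' : ℤ) + 1) - 1 - s) := by
      refine Finset.prod_congr rfl fun s _ => ?_; congr 1; omega
    rw [e1, prod_desc, PP]
    refine Finset.prod_congr rfl fun s _ => ?_; congr 1; push_cast; ring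
  rw [h2, WW]

lemma hYpl (n : ℤ) :
    PS m' GG (n + ((m' : ℤ) + 1))
      = (∏ s ∈ Finset.range m', GG (n + s + 1)) * GG (n + ((m' : ℤ) + 1)) := by
  rw [PS, prod_desc, Finset.prod_range_succ]
  congr 1
  · refine Finset.prod_congr rfl fun s _ => ?_; congr 1; push_cast; ring
  · congr 1; push_cast; ring

lemma hYml (n : ℤ) :
    PS m' GG (n - 1)
      = (∏ s ∈ Finset.range m', GG (n - s - 1)) * GG (n - ((m' : ℤ) + 1)) := by
  rw [PS, Finset.prod_range_succ]
  congr 1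
  · refine Finset.prod_congr rfl fun s _ => ?_; congr 1; omega
  · congr 1; omega

end products

section assemble
variable (m' : ℕ) (α : ℂ) (F gg GG : ℤ → ℂ)
variable (hg : ∀ k, gg k = PP m' F k - α) (hG : ∀ k, GG k = QQ m' F k - α)
variable (hG0 : ∀ k, GG k ≠ 0)

include hg hG hG0 in
lemma assemble (n : ℤ) :
    (PP m' F n * (∑ s ∈ Finset.range m', EE m' gg GG (n + s + 1)) * F (n + ((m' : ℤ) + 1))
        + gg n * (F (n + ((m' : ℤ) + 1)) * EE m' gg GG (n + ((m' : ℤ) + 1)))) * GG n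
      - gg n * F (n + ((m' : ℤ) + 1))
          * (QQ m' F n * ∑ s ∈ Finset.range (m' + 1 + 1), EE m' gg GG (n + s))
    = (gg n * F (n + ((m' : ℤ) + 1)) / GG n) ^ 2 *
        ((∏ s ∈ Finset.range (m' + 1),
            gg (n + s + 1) * F (n + s + 1 + ((m' : ℤ) + 1)) / GG (n + s + 1))
          - ∏ s ∈ Finset.range (m' + 1),
            gg (n - s - 1) * F (n - s - 1 + ((m' : ℤ) + 1)) / GG (n - s - 1))
        * GG n ^ 2
      - gg n * F (n + ((m' : ℤ) + 1)) / GG n *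
          ((∏ s ∈ Finset.range m',
              gg (n + s + 1) * F (n + s + 1 + ((m' : ℤ) + 1)) / GG (n + s + 1))
            - ∏ s ∈ Finset.range m',
              gg (n - s - 1) * F (n - s - 1 + ((m' : ℤ) + 1)) / GG (n - s - 1))
        * GG n ^ 2 := by
  have hgP : ∀ j, PP m' F j = gg j + α := fun j => by rw [hg j]; ring
  have hGQ : ∀ j, QQ m' F j = GG j + α := fun j => by rw [hG j]; ring
  have hB := claimB m' α F gg GG hg hG hG0 n
  have hC := claimC m' α F gg GG hg hG hG0 n
  rw [hGQ n] at hC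
  have htl := htel m' α F gg GG hg hG hG0 n
  have hsp := hsplit m' gg GG n
  have hNUM :
      (PP m' F n * (∑ s ∈ Finset.range m', EE m' gg GG (n + s + 1)) * F (n + ((m' : ℤ) + 1))
          + gg n * (F (n + ((m' : ℤ) + 1)) * EE m' gg GG (n + ((m' : ℤ) + 1)))) * GG n
        - gg n * F (n + ((m' : ℤ) + 1))
            * (QQ m' F n * ∑ s ∈ Finset.range (m' + 1 + 1), EE m' gg GG (n + s))
      = F (n + ((m' : ℤ) + 1)) * (gg n * GG n
          * (MM m' F gg GG (n + ((m' : ℤ) + 1)) - MM m' F gg GG n)) := by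
    rw [hsp, hGQ n, hgP n]
    linear_combination (-(F (n + ((m' : ℤ) + 1)) * (gg n - GG n))) * htl
      + (-(F (n + ((m' : ℤ) + 1)))) * hB + F (n + ((m' : ℤ) + 1)) * hC
  rw [hNUM, prodU_plus, prodU_minus, prodV_plus, prodV_minus]
  have hZm : ZZ m' GG (n + ((m' : ℤ) + 1))
      = (∏ s ∈ Finset.range m', GG (n + s + 1)) * GG (n + ((m' : ℤ) + 1)) * GG n := by
    rw [hZPs' m' GG (n + ((m' : ℤ) + 1)), hYpl, add_sub_cancel_right]
  have hZn : ZZ m' GG n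
      = (∏ s ∈ Finset.range m', GG (n - s - 1)) * GG (n - ((m' : ℤ) + 1)) * GG n := by
    rw [hZPs m' GG n, hYml]
  simp only [MM]
  rw [hZm, hZn, hYpl, hYml, hPQ m' F (n + ((m' : ℤ) + 1)), hPQ m' F n,
    hPhW m' gg (n + ((m' : ℤ) + 1)), hPhW' m' gg n, add_sub_cancel_right]
  have hYp0 : (∏ s ∈ Finset.range m', GG (n + s + 1)) ≠ 0 :=
    Finset.prod_ne_zero_iff.mpr fun s _ => hG0 _
  have hYm0 : (∏ s ∈ Finset.range m', GG (n - s - 1)) ≠ 0 :=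
    Finset.prod_ne_zero_iff.mpr fun s _ => hG0 _
  have hGn0 := hG0 n
  have hGp0 := hG0 (n + ((m' : ℤ) + 1))
  have hGm0 := hG0 (n - ((m' : ℤ) + 1))
  set a1 := gg n
  set a2 := GG n
  set a3 := F (n + ((m' : ℤ) + 1))
  set a4 := WW m' gg (n + ((m' : ℤ) + 1))
  set a5 := PP m' F (n + ((m' : ℤ) + 1))
  set a6 := gg (n + ((m' : ℤ) + 1))
  set a7 := GG (n + ((m' : ℤ) + 1))
  set a8 := F (n + ((m' : ℤ) + 1) + ((m' : ℤ) + 1))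
  set a9 := WW m' gg n
  set a10 := PP m' F n
  set a11 := F n
  set a12 := gg (n - ((m' : ℤ) + 1))
  set a13 := GG (n - ((m' : ℤ) + 1))
  set yp := ∏ s ∈ Finset.range m', GG (n + s + 1)
  set ym := ∏ s ∈ Finset.range m', GG (n - s - 1)
  have hD1 : yp * a7 * a2 ≠ 0 := mul_ne_zero (mul_ne_zero hYp0 hGp0) hGn0
  have hD2 : ym * a13 * a2 ≠ 0 := mul_ne_zero (mul_ne_zero hYm0 hGm0) hGn0
  rw [div_sub_div _ _ hD1 hD2, div_pow,
    div_sub_div _ _ (mul_ne_zero hYp0 hGp0) (mul_ne_zero hYm0 hGm0),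
    div_sub_div _ _ hYp0 hYm0]
  rw [div_mul_div_comm, div_mul_div_comm, div_mul_eq_mul_div, div_mul_eq_mul_div]
  have hE1 : a2 ^ 2 * (yp * a7 * (ym * a13)) ≠ 0 :=
    mul_ne_zero (pow_ne_zero 2 hGn0)
      (mul_ne_zero (mul_ne_zero hYp0 hGp0) (mul_ne_zero hYm0 hGm0))
  have hE2 : a2 * (yp * ym) ≠ 0 := mul_ne_zero hGn0 (mul_ne_zero hYp0 hYm0)
  rw [div_sub_div _ _ hE1 hE2]
  rw [← mul_div_assoc, ← mul_div_assoc]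
  rw [div_eq_div_iff (mul_ne_zero hD1 hD2) (mul_ne_zero hE1 hE2)]
  ring

end assemble

/-- The Miura-type substitution `ũ = g f_m / G` maps solutions of the modified lattice
into solutions of the integrable discretization of the Sawada–Kotera equation. -/
theorem miura_modified_to_dSK_second
    (m : ℕ) (hm : 1 ≤ m) (α : ℂ)
    (f : ℝ → ℤ → ℂ)
    (g G : ℝ → ℤ → ℂ)
    (hg : ∀ (t : ℝ) (n : ℤ),
      g t n = (∏ s ∈ Finset.range (m - 1), f t (n + s + 1)) - α)
    (hG : ∀ (t : ℝ) (n : ℤ),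
      G t n = (∏ s ∈ Finset.range (m + 1), f t (n + s)) - α)
    (hG0 : ∀ (t : ℝ) (n : ℤ), G t n ≠ 0)
    (hf : ∀ (t : ℝ) (n : ℤ),
      HasDerivAt (fun τ => f τ n)
        (f t n * (∏ s ∈ Finset.range (m - 1), g t (n - s - 1))
            / (∏ s ∈ Finset.range (m + 1), G t (n - s))
          * (g t n * g t (n - m) * (G t n - G t (n - m))
            - G t n * G t (n - m) * (g t n - g t (n - m)))) t)
    (u' : ℝ → ℤ → ℂ)
    (hu' : ∀ (t : ℝ) (n : ℤ), u' t n = g t n * f t (n + m) / G t n) :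
    ∀ (t : ℝ) (n : ℤ),
      HasDerivAt (fun τ => u' τ n)
        (u' t n ^ 2 *
            ((∏ s ∈ Finset.range m, u' t (n + s + 1)) -
              ∏ s ∈ Finset.range m, u' t (n - s - 1))
          - u' t n *
            ((∏ s ∈ Finset.range (m - 1), u' t (n + s + 1)) -
              ∏ s ∈ Finset.range (m - 1), u' t (n - s - 1))) t := by
  obtain ⟨m', rfl⟩ : ∃ m', m = m' + 1 := ⟨m - 1, by omega⟩
  intro t n
  simp only [Nat.add_sub_cancel] at hg hf ⊢
  push_cast at hf hu'
  -- derivative of each f-component, in `EE` form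
  have hfE : ∀ k : ℤ, HasDerivAt (fun τ => f τ k)
      (f t k * EE m' (g t) (G t) k) t := by
    intro k
    have h := hf t k
    have e : f t k * (∏ s ∈ Finset.range m', g t (k - s - 1))
          / (∏ s ∈ Finset.range (m' + 1 + 1), G t (k - s))
        * (g t k * g t (k - ((m' : ℤ) + 1)) * (G t k - G t (k - ((m' : ℤ) + 1)))
          - G t k * G t (k - ((m' : ℤ) + 1)) * (g t k - g t (k - ((m' : ℤ) + 1))))
        = f t k * EE m' (g t) (G t) k := by
      simp only [EE, WW, ZZ, BB]; ring
    rwa [e] at h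
  -- derivative of the numerator product
  have hPd : HasDerivAt (fun τ => ∏ s ∈ Finset.range m', f τ (n + s + 1))
      (PP m' (f t) n * ∑ s ∈ Finset.range m', EE m' (g t) (G t) (n + s + 1)) t := by
    have h := HasDerivAt.finset_prod (𝕜 := ℝ) (x := t) (u := Finset.range m')
      (f := fun (s : ℕ) (τ : ℝ) => f τ (n + s + 1))
      (f' := fun s : ℕ => f t (n + s + 1) * EE m' (g t) (G t) (n + s + 1))
      (fun i _ => hfE (n + i + 1))
    have e : (∑ i ∈ Finset.range m', (∏ j ∈ (Finset.range m').erase i, f t (n + j + 1))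
          • (f t (n + i + 1) * EE m' (g t) (G t) (n + i + 1)))
        = PP m' (f t) n * ∑ s ∈ Finset.range m', EE m' (g t) (G t) (n + s + 1) := by
      rw [Finset.mul_sum]
      refine Finset.sum_congr rfl fun i hi => ?_
      rw [smul_eq_mul, ← mul_assoc,
        mul_comm (∏ j ∈ (Finset.range m').erase i, f t (n + j + 1)) (f t (n + i + 1)),
        Finset.mul_prod_erase (Finset.range m') (fun j : ℕ => f t (n + j + 1)) hi]
      simp only [PP]
    rw [← e]; refine h.congr_of_eventuallyEq (Filter.Eventually.of_forall fun τ => ?_)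
    simp only [Finset.prod_apply]
  -- derivative of the denominator product
  have hQd : HasDerivAt (fun τ => ∏ s ∈ Finset.range (m' + 1 + 1), f τ (n + s))
      (QQ m' (f t) n * ∑ s ∈ Finset.range (m' + 1 + 1), EE m' (g t) (G t) (n + s)) t := by
    have h := HasDerivAt.finset_prod (𝕜 := ℝ) (x := t) (u := Finset.range (m' + 1 + 1))
      (f := fun (s : ℕ) (τ : ℝ) => f τ (n + s))
      (f' := fun s : ℕ => f t (n + s) * EE m' (g t) (G t) (n + s))
      (fun i _ => hfE (n + i))
    have e : (∑ i ∈ Finset.range (m' + 1 + 1),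
          (∏ j ∈ (Finset.range (m' + 1 + 1)).erase i, f t (n + j))
          • (f t (n + i) * EE m' (g t) (G t) (n + i)))
        = QQ m' (f t) n * ∑ s ∈ Finset.range (m' + 1 + 1), EE m' (g t) (G t) (n + s) := by
      rw [Finset.mul_sum]
      refine Finset.sum_congr rfl fun i hi => ?_
      rw [smul_eq_mul, ← mul_assoc,
        mul_comm (∏ j ∈ (Finset.range (m' + 1 + 1)).erase i, f t (n + j)) (f t (n + i)),
        Finset.mul_prod_erase (Finset.range (m' + 1 + 1)) (fun j : ℕ => f t (n + j)) hi]
      simp only [QQ]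
    rw [← e]; refine h.congr_of_eventuallyEq (Filter.Eventually.of_forall fun τ => ?_)
    simp only [Finset.prod_apply]
  have hGn0' : (∏ s ∈ Finset.range (m' + 1 + 1), f t (n + s)) - α ≠ 0 := by
    rw [← hG t n]; exact hG0 t n
  have HD := ((hPd.sub_const α).mul (hfE (n + ((m' : ℤ) + 1)))).div (hQd.sub_const α) hGn0'
  simp only [Pi.mul_apply] at HD
  rw [← hg t n, ← hG t n] at HD
  have HD' : HasDerivAt (fun τ => u' τ n)
      ((((PP m' (f t) n * ∑ s ∈ Finset.range m', EE m' (g t) (G t) (n + s + 1))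
            * f t (n + ((m' : ℤ) + 1))
          + g t n * (f t (n + ((m' : ℤ) + 1)) * EE m' (g t) (G t) (n + ((m' : ℤ) + 1)))) * G t n
        - g t n * f t (n + ((m' : ℤ) + 1))
            * (QQ m' (f t) n * ∑ s ∈ Finset.range (m' + 1 + 1), EE m' (g t) (G t) (n + s)))
        / G t n ^ 2) t := by
    refine HD.congr_of_eventuallyEq (Filter.Eventually.of_forall fun τ => ?_)
    simp only [hu', hg, hG, Pi.mul_apply, Pi.div_apply]
  convert HD' using 1
  simp only [hu']
  rw [eq_div_iff (pow_ne_zero 2 (hG0 t n))]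
  have hA := assemble m' α (f t) (g t) (G t)
    (fun k => hg t k) (fun k => hG t k) (fun k => hG0 t k) n
  linear_combination -hA
end

section
/- Let m ≥ 1 be an integer. Let v : ℝ × ℤ → ℂ be differentiable in the time variable, with v(t,n) ≠ 0 for all t, n, and satisfy ∂_t v(t,n) = (∏_{s=0}^{m−1} v(t,n+s))/(∏_{s=1}^{m} v(t,n−s))·(v(t,n+m) − v(t,n−m)) for all t and n. Then the function u(t,n) := v(t,n+m)/v(t,n) satisfies ∂_t u(t,n) = u(t,n)²·(∏_{s=1}^{m} u(t,n+s) − ∏_{s=1}^{m} u(t,n−s)) − u(t,n)·(∏_{s=1}^{m−1} u(t,n+s) − ∏_{s=1}^{m−1} u(t,n−s)) for all t and n. -/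
/-- The substitution `u = v_m / v` maps solutions of the potential lattice
`∂_t v = (v_{m-1}⋯v)/(v_{-1}⋯v_{-m}) (v_m - v_{-m})` into solutions of the integrable
discretization of the Sawada–Kotera equation. -/
theorem potential_to_dSK
    (m : ℕ) (hm : 1 ≤ m)
    (v : ℝ → ℤ → ℂ) (hv0 : ∀ (t : ℝ) (n : ℤ), v t n ≠ 0)
    (hv : ∀ (t : ℝ) (n : ℤ),
      HasDerivAt (fun τ => v τ n)
        ((∏ s ∈ Finset.range m, v t (n + s)) / (∏ s ∈ Finset.range m, v t (n - s - 1))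
          * (v t (n + m) - v t (n - m))) t)
    (u : ℝ → ℤ → ℂ)
    (hu : ∀ (t : ℝ) (n : ℤ), u t n = v t (n + m) / v t n) :
    ∀ (t : ℝ) (n : ℤ),
      HasDerivAt (fun τ => u τ n)
        (u t n ^ 2 *
            ((∏ s ∈ Finset.range m, u t (n + s + 1)) -
              ∏ s ∈ Finset.range m, u t (n - s - 1))
          - u t n *
            ((∏ s ∈ Finset.range (m - 1), u t (n + s + 1)) -
              ∏ s ∈ Finset.range (m - 1), u t (n - s - 1))) t := by
  intro t n
  obtain ⟨k, rfl⟩ : ∃ k, m = k + 1 := ⟨m - 1, (Nat.succ_pred_eq_of_pos hm).symm⟩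
  simp only [hu, Finset.prod_div_distrib, Nat.add_sub_cancel]
  have hd := (hv t (n + (k+1 : ℕ))).div (hv t n) (hv0 t n)
  refine hd.congr_deriv ?_
  symm
  -- names for atoms
  set x0 := v t n with hx0def
  set xm := v t (n + ((k+1 : ℕ) : ℤ)) with hxmdef
  set x2m := v t (n + ((k+1 : ℕ) : ℤ) + ((k+1 : ℕ) : ℤ)) with hx2mdef
  set xmm := v t (n - ((k+1 : ℕ) : ℤ)) with hxmmdef
  have hx0 : x0 ≠ 0 := hv0 t _
  have hxm : xm ≠ 0 := hv0 t _
  have hx2m : x2m ≠ 0 := hv0 t _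
  have hxmm : xmm ≠ 0 := hv0 t _
  have hxx : v t (n + ((k+1 : ℕ) : ℤ) - ((k+1 : ℕ) : ℤ)) = x0 := congrArg (v t) (by ring)
  rw [hxx]
  set A := ∏ s ∈ Finset.range (k+1), v t (n + (s : ℤ)) with hAdef
  set B := ∏ s ∈ Finset.range (k+1), v t (n - (s : ℤ) - 1) with hBdef
  set A2 := ∏ s ∈ Finset.range (k+1), v t (n + ((k+1 : ℕ) : ℤ) + (s : ℤ)) with hA2def
  set N1 := ∏ s ∈ Finset.range (k+1), v t (n + (s : ℤ) + 1 + ((k+1 : ℕ) : ℤ)) with hN1def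
  set D1 := ∏ s ∈ Finset.range (k+1), v t (n + (s : ℤ) + 1) with hD1def
  set M := ∏ s ∈ Finset.range (k+1), v t (n - (s : ℤ) - 1 + ((k+1 : ℕ) : ℤ)) with hMdef
  set N1' := ∏ s ∈ Finset.range k, v t (n + (s : ℤ) + 1 + ((k+1 : ℕ) : ℤ)) with hN1'def
  set D1' := ∏ s ∈ Finset.range k, v t (n + (s : ℤ) + 1) with hD1'def
  set M' := ∏ s ∈ Finset.range k, v t (n - (s : ℤ) - 1 + ((k+1 : ℕ) : ℤ)) with hM'def
  set B' := ∏ s ∈ Finset.range k, v t (n - (s : ℤ) - 1) with hB'def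
  have hA : A ≠ 0 := Finset.prod_ne_zero_iff.mpr fun s _ => hv0 t _
  have hB : B ≠ 0 := Finset.prod_ne_zero_iff.mpr fun s _ => hv0 t _
  -- the telescoping key identity
  have key : ∀ a : ℤ, (∏ s ∈ Finset.range (k+1), v t (a + (s : ℤ))) * v t (a + ((k+1 : ℕ) : ℤ))
      = v t a * ∏ s ∈ Finset.range (k+1), v t (a + (s : ℤ) + 1) := by
    intro a
    have h1 := Finset.prod_range_succ (fun s : ℕ => v t (a + (s : ℤ))) (k+1)
    have h2 := Finset.prod_range_succ' (fun s : ℕ => v t (a + (s : ℤ))) (k+1)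
    rw [h1] at h2
    rw [h2]
    have e0 : v t (a + ((0:ℕ) : ℤ)) = v t a := by norm_num
    have e1 : ∏ s ∈ Finset.range (k+1), v t (a + ((s+1 : ℕ) : ℤ))
        = ∏ s ∈ Finset.range (k+1), v t (a + (s : ℤ) + 1) :=
      Finset.prod_congr rfl fun s _ => congrArg (v t) (by push_cast; ring)
    rw [e0, e1]; ring
  -- reflection identity
  have hArefl : ∏ j ∈ Finset.range (k+1), v t (n + ((k - j : ℕ) : ℤ)) = A := by
    rw [hAdef, ← Finset.prod_range_reflect (fun j : ℕ => v t (n + (j : ℤ))) (k+1)]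
    exact Finset.prod_congr rfl fun j hj => congrArg (v t) (by
      rw [Finset.mem_range] at hj; omega)
  have hrefl1 : ∏ s ∈ Finset.range (k+1), v t (n + ((k+1 : ℕ) : ℤ) - (s : ℤ) - 1) = A := by
    rw [← hArefl]
    exact Finset.prod_congr rfl fun s hs => congrArg (v t) (by
      rw [Finset.mem_range] at hs; omega)
  have eM : M = A := by
    rw [hMdef, ← hArefl]
    exact Finset.prod_congr rfl fun s hs => congrArg (v t) (by
      rw [Finset.mem_range] at hs; omega)
  -- D1 identity
  have keyn : A * xm = x0 * D1 := key n
  -- N1 identity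
  have keym : A2 * x2m = xm * N1 := by
    have h := key (n + ((k+1 : ℕ) : ℤ))
    have hc : ∏ s ∈ Finset.range (k+1), v t (n + ((k+1 : ℕ) : ℤ) + (s : ℤ) + 1) = N1 :=
      Finset.prod_congr rfl fun s _ => congrArg (v t) (by ring)
    rw [hc] at h; exact h
  -- splitting off last factors
  have hN1s : N1 = N1' * x2m := by
    rw [hN1def, Finset.prod_range_succ, hN1'def, hx2mdef]
    congr 2; push_cast; ring
  have hD1s : D1 = D1' * xm := by
    rw [hD1def, Finset.prod_range_succ, hD1'def, hxmdef]
    congr 2; push_cast; ring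
  have hMs : M = M' * x0 := by
    rw [hMdef, Finset.prod_range_succ, hM'def, hx0def]
    congr 2; push_cast; ring
  have hBs : B = B' * xmm := by
    rw [hBdef, Finset.prod_range_succ, hB'def, hxmmdef]
    congr 2; push_cast; ring
  -- fractional forms
  have eD1 : D1 = A * xm / x0 := by
    rw [eq_div_iff hx0, keyn]; ring
  have eN1 : N1 = A2 * x2m / xm := by
    rw [eq_div_iff hxm, keym]; ring
  have eN1' : N1' = A2 / xm := by
    rw [eq_div_iff hxm]
    exact mul_right_cancel₀ hx2m (by rw [keym, hN1s]; ring)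
  have eD1' : D1' = A / x0 := by
    rw [eq_div_iff hx0]
    exact mul_right_cancel₀ hxm (by rw [keyn, hD1s]; ring)
  have eM' : M' = A / x0 := by
    rw [eq_div_iff hx0, ← eM, hMs]
  have eB' : B' = B / xmm := by
    rw [eq_div_iff hxmm]; exact hBs.symm
  rw [hrefl1, eM, eN1, eD1, eN1', eD1', eM', eB']
  clear_value x0 xm x2m xmm A B A2 N1 D1 M N1' D1' M' B'
  have h1 : (A2*x2m/xm)/(A*xm/x0) = A2*x2m*x0/(A*xm^2) := by
    rw [div_eq_div_iff (div_ne_zero (mul_ne_zero hA hxm) hx0)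
      (mul_ne_zero hA (pow_ne_zero 2 hxm))]
    field_simp
  have h2 : (A2/xm)/(A/x0) = A2*x0/(A*xm) := by
    rw [div_eq_div_iff (div_ne_zero hA hx0) (mul_ne_zero hA hxm)]
    field_simp
  have h3 : (A/x0)/(B/xmm) = A*xmm/(B*x0) := by
    rw [div_eq_div_iff (div_ne_zero hB hxmm) (mul_ne_zero hB hx0)]
    field_simp
  rw [h1, h2, h3, div_pow]
  field_simp [hA, hB, hx0, hxm, hx2m, hxmm]
  ring
end

section
/- Let m ≥ 1 and let α⁽ⁱ⁾, α⁽ʲ⁾ ∈ ℂ with α⁽ⁱ⁾ ≠ α⁽ʲ⁾. Let v, vⁱ, vʲ : ℤ → ℂ be nowhere-vanishing functions satisfying, for all n ∈ ℤ, (vⁱ(n+m) − v(n))·∏_{s=0}^{m−1} vⁱ(n+s) = α⁽ⁱ⁾·(v(n+m) − vⁱ(n))·∏_{s=0}^{m−1} v(n+s) and (vʲ(n+m) − v(n))·∏_{s=0}^{m−1} vʲ(n+s) = α⁽ʲ⁾·(v(n+m) − vʲ(n))·∏_{s=0}^{m−1} v(n+s). For s = 0,…,m define P_s(n) = (α⁽ⁱ⁾·∏_{r=0}^{m−1}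 vʲ(n+r) − α⁽ʲ⁾·∏_{r=0}^{m−1} vⁱ(n+r))·∏_{r=0}^{m−1} v(n+r) + Σ_{r=0}^{m−1} γ_{r,s}·(∏_{t=r+1}^{m−1} v(n+t))²·v(n+r)·(vⁱ(n+r) − vʲ(n+r))·(∏_{t=0}^{r−1} vⁱ(n+t))·(∏_{t=0}^{r−1} vʲ(n+t)), where γ_{r,s} = 1 if s ≤ r and γ_{r,s} = α⁽ⁱ⁾·α⁽ʲ⁾ if r < s, and assume P_s(n) ≠ 0 for all s and n. Then: (a) for all n ∈ ℤ and 0 ≤ s ≤ m−2, P_{s+2}(n)·P_s(n+1) = P_{s+1}(n)·P_{s+1}(n+1), so that the function v^{ij}(n) := v(n)·P_1(n)/P_0(n) satisfies v^{ij}(n+s) = v(n+s)·P_{s+1}(n)/P_s(n) for s = 0,…,m−1; and (b) v^{ij} satisfies, for all n ∈ ℤ, (v^{ij}(n+m) − vʲ(n))·∏_{s=0}^{m−1} v^{ij}(n+s) = α⁽ⁱ⁾·(vʲ(n+m) − v^{ij}(n))·∏_{s=0}^{m−1} vʲ(n+s) and (v^{ij}(n+m) − vⁱ(n))·∏_{s=0}^{m−1}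 v^{ij}(n+s) = α⁽ʲ⁾·(vⁱ(n+m) − v^{ij}(n))·∏_{s=0}^{m−1} vⁱ(n+s). -/
lemma aux_prod_shift (f : ℤ → ℂ) (m : ℕ) (n : ℤ) :
    f n * ∏ r ∈ Finset.range m, f (n + 1 + r) = (∏ r ∈ Finset.range m, f (n + r)) * f (n + m) := by
  have h2 := Finset.prod_range_succ' (fun r : ℕ => f (n + r)) m
  have h1 := Finset.prod_range_succ (fun r : ℕ => f (n + r)) m
  have h3 : ∀ r : ℕ, f (n + ((r : ℤ) + 1)) = f (n + 1 + r) := fun r => by congr 1; ring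
  push_cast at h2
  rw [add_zero] at h2
  calc f n * ∏ r ∈ Finset.range m, f (n + 1 + r)
      = (∏ r ∈ Finset.range m, f (n + ((r:ℤ) + 1))) * f n := by
        rw [Finset.prod_congr rfl fun r _ => h3 r]; ring
    _ = ∏ r ∈ Finset.range (m+1), f (n + r) := by rw [← h2]
    _ = (∏ r ∈ Finset.range m, f (n + r)) * f (n + m) := h1

lemma aux_prod_bot (f : ℤ → ℂ) (k : ℕ) (n : ℤ) :
    ∏ r ∈ Finset.range (k+1), f (n + r) = f n * ∏ t ∈ Finset.Ico 1 (k+1), f (n + t) := by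
  rw [Finset.range_eq_Ico, Finset.prod_eq_prod_Ico_succ_bot (by omega : 0 < k+1)]
  norm_num

lemma aux_prod_Ico_shift (f : ℤ → ℂ) (r k : ℕ) (hr : r < k) (n : ℤ) :
    ∏ t ∈ Finset.Ico (r + 1) (k + 1), f (n + 1 + t)
      = (∏ t ∈ Finset.Ico (r + 2) (k + 1), f (n + t)) * f (n + (k + 1 : ℕ)) := by
  obtain ⟨d, rfl⟩ : ∃ d, k = r + 1 + d := ⟨k - (r+1), by omega⟩
  rw [Finset.prod_Ico_eq_prod_range, Finset.prod_Ico_eq_prod_range]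
  have e1 : r + 1 + d + 1 - (r + 1) = d + 1 := by omega
  have e2 : r + 1 + d + 1 - (r + 2) = d := by omega
  rw [e1, e2, Finset.prod_range_succ]
  congr 1
  · refine Finset.prod_congr rfl fun i _ => ?_
    congr 1; push_cast; ring
  · congr 1; push_cast; ring

set_option maxHeartbeats 4000000

/-- Core of the multidimensional consistency theorem for the Bäcklund transformation of
the potential form of the discretization of the Sawada–Kotera equation: the
superposition formula `v^{ij}_s = v_s P_{s+1}/P_s` is well defined and `v^{ij}`
satisfies both shifted m-quad-equations. -/
theorem potential_dSK_superposition
    (m : ℕ) (hm : 1 ≤ m) (αi αj : ℂ) (hαα : αi ≠ αj)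
    (v vi vj : ℤ → ℂ)
    (hv0 : ∀ n : ℤ, v n ≠ 0) (hvi0 : ∀ n : ℤ, vi n ≠ 0) (hvj0 : ∀ n : ℤ, vj n ≠ 0)
    (hqi : ∀ n : ℤ,
      (vi (n + m) - v n) * ∏ s ∈ Finset.range m, vi (n + s)
        = αi * (v (n + m) - vi n) * ∏ s ∈ Finset.range m, v (n + s))
    (hqj : ∀ n : ℤ,
      (vj (n + m) - v n) * ∏ s ∈ Finset.range m, vj (n + s)
        = αj * (v (n + m) - vj n) * ∏ s ∈ Finset.range m, v (n + s))
    (P : ℕ → ℤ → ℂ)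
    (hP : ∀ (s : ℕ) (n : ℤ),
      P s n =
        (αi * (∏ r ∈ Finset.range m, vj (n + r))
          - αj * ∏ r ∈ Finset.range m, vi (n + r)) * ∏ r ∈ Finset.range m, v (n + r)
        + ∑ r ∈ Finset.range m,
            (if s ≤ r then 1 else αi * αj)
              * (∏ t ∈ Finset.Ico (r + 1) m, v (n + t)) ^ 2
              * v (n + r) * (vi (n + r) - vj (n + r))
              * (∏ t ∈ Finset.range r, vi (n + t))
              * ∏ t ∈ Finset.range r, vj (n + t))
    (hP0 : ∀ (s : ℕ), s ≤ m → ∀ n : ℤ, P s n ≠ 0)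
    (vij : ℤ → ℂ)
    (hvij : ∀ n : ℤ, vij n = v n * P 1 n / P 0 n) :
    (∀ (n : ℤ) (s : ℕ), s + 2 ≤ m →
      P (s + 2) n * P s (n + 1) = P (s + 1) n * P (s + 1) (n + 1))
    ∧ (∀ (n : ℤ) (s : ℕ), s < m →
      vij (n + s) = v (n + s) * P (s + 1) n / P s n)
    ∧ (∀ n : ℤ,
      (vij (n + m) - vj n) * ∏ s ∈ Finset.range m, vij (n + s)
        = αi * (vj (n + m) - vij n) * ∏ s ∈ Finset.range m, vj (n + s))
    ∧ (∀ n : ℤ,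
      (vij (n + m) - vi n) * ∏ s ∈ Finset.range m, vij (n + s)
        = αj * (vi (n + m) - vij n) * ∏ s ∈ Finset.range m, vi (n + s)) := by
  obtain ⟨k, rfl⟩ : ∃ k, m = k + 1 := ⟨m - 1, by omega⟩
  set T : ℕ → ℤ → ℂ := fun r n =>
    (∏ t ∈ Finset.Ico (r + 1) (k + 1), v (n + t)) ^ 2 * v (n + r) * (vi (n + r) - vj (n + r)) *
      (∏ t ∈ Finset.range r, vi (n + t)) * ∏ t ∈ Finset.range r, vj (n + t) with hT
  set A : ℤ → ℂ := fun n => ∏ r ∈ Finset.range (k + 1), v (n + r) with hA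
  set I : ℤ → ℂ := fun n => ∏ r ∈ Finset.range (k + 1), vi (n + r) with hI
  set J : ℤ → ℂ := fun n => ∏ r ∈ Finset.range (k + 1), vj (n + r) with hJ
  set S : ℤ → ℂ := fun n => ∑ r ∈ Finset.range (k + 1), T r n with hS
  have hA0 : ∀ n, A n ≠ 0 := fun n =>
    Finset.prod_ne_zero_iff.mpr fun i _ => hv0 _
  have hI0 : ∀ n, I n ≠ 0 := fun n =>
    Finset.prod_ne_zero_iff.mpr fun i _ => hvi0 _
  have hJ0 : ∀ n, J n ≠ 0 := fun n =>
    Finset.prod_ne_zero_iff.mpr fun i _ => hvj0 _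
  -- restated quad equations
  have hqi' : ∀ n : ℤ, (vi (n + ((k+1 : ℕ) : ℤ)) - v n) * I n
      = αi * (v (n + ((k+1 : ℕ) : ℤ)) - vi n) * A n := fun n => by
    simpa only [hI, hA] using hqi n
  have hqj' : ∀ n : ℤ, (vj (n + ((k+1 : ℕ) : ℤ)) - v n) * J n
      = αj * (v (n + ((k+1 : ℕ) : ℤ)) - vj n) * A n := fun n => by
    simpa only [hJ, hA] using hqj n
  -- P in terms of T
  have hP' : ∀ (s : ℕ) (n : ℤ), P s n = (αi * J n - αj * I n) * A n
      + ∑ r ∈ Finset.range (k + 1), (if s ≤ r then 1 else αi * αj) * T r n := by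
    intro s n
    rw [hP s n]
    simp only [hA, hI, hJ, hT]
    congr 1
    exact Finset.sum_congr rfl fun r _ => by ring
  -- product shift identities
  have hE1 : ∀ n : ℤ, v n * A (n+1) = A n * v (n + ((k+1 : ℕ) : ℤ)) := fun n => by
    simpa only [hA] using aux_prod_shift v (k+1) n
  have hE2 : ∀ n : ℤ, vi n * I (n+1) = I n * vi (n + ((k+1 : ℕ) : ℤ)) := fun n => by
    simpa only [hI] using aux_prod_shift vi (k+1) n
  have hE3 : ∀ n : ℤ, vj n * J (n+1) = J n * vj (n + ((k+1 : ℕ) : ℤ)) := fun n => by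
    simpa only [hJ] using aux_prod_shift vj (k+1) n
  have hE4 : ∀ n : ℤ, v n * T 0 n = A n ^ 2 * (vi n - vj n) := by
    intro n
    have hb := aux_prod_bot v k n
    simp only [hT, hA, hb]
    simp only [Finset.range_zero, Finset.prod_empty, Nat.cast_zero, add_zero, zero_add, mul_one]
    ring
  have hE5 : ∀ n : ℤ, vi n * vj n * T k (n+1)
      = v (n + ((k+1 : ℕ) : ℤ)) * (vi (n + ((k+1 : ℕ) : ℤ)) - vj (n + ((k+1 : ℕ) : ℤ))) * I n * J n := by
    intro n
    have hi := aux_prod_shift vi k n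
    have hj := aux_prod_shift vj k n
    have hI' : I n = (∏ r ∈ Finset.range k, vi (n + r)) * vi (n + (k : ℤ)) := by
      simp only [hI]; exact Finset.prod_range_succ _ k
    have hJ' : J n = (∏ r ∈ Finset.range k, vj (n + r)) * vj (n + (k : ℤ)) := by
      simp only [hJ]; exact Finset.prod_range_succ _ k
    have harg : ∀ f : ℤ → ℂ, f (n + 1 + (k : ℤ)) = f (n + ((k+1 : ℕ) : ℤ)) := fun f => by
      congr 1; push_cast; ring
    simp only [hT, Finset.Ico_self, Finset.prod_empty, one_pow, one_mul]
    rw [harg v, harg vi, harg vj, hI', hJ', ← hi, ← hj]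
    have hAi : ∀ t : ℕ, vi (n + 1 + (t : ℤ)) = vi (n + 1 + (t : ℤ)) := fun _ => rfl
    ring
  -- T shift
  have K1 : ∀ (n : ℤ) (r : ℕ), r < k →
      v (n + ((k+1 : ℕ) : ℤ)) ^ 2 * T (r+1) n = vi n * vj n * T r (n+1) := by
    intro n r hr
    have hIco := aux_prod_Ico_shift v r k hr n
    have hi := Finset.prod_range_succ' (fun t : ℕ => vi (n + t)) r
    have hj := Finset.prod_range_succ' (fun t : ℕ => vj (n + t)) r
    have harg : ∀ (f : ℤ → ℂ) (t : ℕ), f (n + ((t+1 : ℕ) : ℤ)) = f (n + 1 + (t : ℤ)) :=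
      fun f t => by congr 1; push_cast; ring
    have hi' : ∏ t ∈ Finset.range (r+1), vi (n + t)
        = vi n * ∏ t ∈ Finset.range r, vi (n + 1 + t) := by
      rw [hi, Finset.prod_congr rfl fun t _ => harg vi t]
      push_cast; ring
    have hj' : ∏ t ∈ Finset.range (r+1), vj (n + t)
        = vj n * ∏ t ∈ Finset.range r, vj (n + 1 + t) := by
      rw [hj, Finset.prod_congr rfl fun t _ => harg vj t]
      push_cast; ring
    simp only [hT]
    rw [hIco, hi', hj', harg v r, harg vi r, harg vj r]
    ring
  have hE6 : ∀ n : ℤ, vi n * vj n * S (n+1)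
      = v (n + ((k+1 : ℕ) : ℤ)) ^ 2 * (S n - T 0 n) + vi n * vj n * T k (n+1) := by
    intro n
    have h1 : S (n+1) = (∑ r ∈ Finset.range k, T r (n+1)) + T k (n+1) := by
      simp only [hS]; exact Finset.sum_range_succ _ k
    have h2 : S n = (∑ r ∈ Finset.range k, T (r+1) n) + T 0 n := by
      simp only [hS]; exact Finset.sum_range_succ' _ k
    have h3 : vi n * vj n * ∑ r ∈ Finset.range k, T r (n+1)
        = v (n + ((k+1 : ℕ) : ℤ)) ^ 2 * ∑ r ∈ Finset.range k, T (r+1) n := by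
      rw [Finset.mul_sum, Finset.mul_sum]
      exact Finset.sum_congr rfl fun r hr => (K1 n r (Finset.mem_range.mp hr)).symm
    rw [h1, h2]
    linear_combination h3
  -- base relation
  have K2 : ∀ n : ℤ, v (n + ((k+1 : ℕ) : ℤ)) ^ 2 * ((αi * J n - αj * I n) * A n + αi * αj * T 0 n)
      = vi n * vj n * ((αi * J (n+1) - αj * I (n+1)) * A (n+1) + T k (n+1)) := by
    intro n
    have ha := hv0 n
    have hp := hvi0 n
    have hq := hvj0 n
    have hIn := hI0 n
    have hJn := hJ0 n
    have hA1 : A (n+1) = A n * v (n + ((k+1 : ℕ) : ℤ)) / v n := by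
      rw [eq_div_iff ha]; linear_combination hE1 n
    have hI1 : I (n+1) = I n * vi (n + ((k+1 : ℕ) : ℤ)) / vi n := by
      rw [eq_div_iff hp]; linear_combination hE2 n
    have hJ1 : J (n+1) = J n * vj (n + ((k+1 : ℕ) : ℤ)) / vj n := by
      rw [eq_div_iff hq]; linear_combination hE3 n
    have hT0 : T 0 n = A n ^ 2 * (vi n - vj n) / v n := by
      rw [eq_div_iff ha]; linear_combination hE4 n
    have hTk : T k (n+1) = v (n + ((k+1 : ℕ) : ℤ))
        * (vi (n + ((k+1 : ℕ) : ℤ)) - vj (n + ((k+1 : ℕ) : ℤ))) * I n * J n / (vi n * vj n) := by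
      rw [eq_div_iff (mul_ne_zero hp hq)]; linear_combination hE5 n
    have hvi' : vi (n + ((k+1 : ℕ) : ℤ))
        = v n + αi * (v (n + ((k+1 : ℕ) : ℤ)) - vi n) * A n / I n := by
      have h := hqi' n
      push_cast at h ⊢
      field_simp
      linear_combination h
    have hvj' : vj (n + ((k+1 : ℕ) : ℤ))
        = v n + αj * (v (n + ((k+1 : ℕ) : ℤ)) - vj n) * A n / J n := by
      have h := hqj' n
      push_cast at h ⊢
      field_simp
      linear_combination h
    rw [hA1, hI1, hJ1, hT0, hTk, hvi', hvj']
    field_simp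
    ring
  -- main shift relation for P
  have K3 : ∀ (n : ℤ) (s : ℕ), s ≤ k →
      v (n + ((k+1 : ℕ) : ℤ)) ^ 2 * P (s+1) n = vi n * vj n * P s (n+1) := by
    intro n s hs
    rw [hP' (s+1) n, hP' s (n+1)]
    rw [Finset.sum_range_succ' (fun r => (if s+1 ≤ r then (1:ℂ) else αi*αj) * T r n) k]
    rw [Finset.sum_range_succ (fun r => (if s ≤ r then (1:ℂ) else αi*αj) * T r (n+1)) k]
    simp only [Nat.add_le_add_iff_right, Nat.not_succ_le_zero, if_neg, if_pos hs,
      Nat.le_zero, one_mul]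
    rw [if_neg (by omega : ¬ s + 1 = 0)]
    have hsum : v (n + ((k+1 : ℕ) : ℤ)) ^ 2 * ∑ r ∈ Finset.range k, (if s ≤ r then (1:ℂ) else αi*αj) * T (r+1) n
        = vi n * vj n * ∑ r ∈ Finset.range k, (if s ≤ r then (1:ℂ) else αi*αj) * T r (n+1) := by
      rw [Finset.mul_sum, Finset.mul_sum]
      refine Finset.sum_congr rfl fun r hr => ?_
      have h := K1 n r (Finset.mem_range.mp hr)
      linear_combination (if s ≤ r then (1:ℂ) else αi*αj) * h
    linear_combination hsum + K2 n
  -- Part (a)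
  have PartA : ∀ (n : ℤ) (s : ℕ), s + 2 ≤ k + 1 →
      P (s + 2) n * P s (n + 1) = P (s + 1) n * P (s + 1) (n + 1) := by
    intro n s hs
    have h1 := K3 n (s+1) (by omega)
    have h2 := K3 n s (by omega)
    apply mul_left_cancel₀ (pow_ne_zero 2 (hv0 (n + ((k+1 : ℕ) : ℤ))))
    linear_combination P s (n+1) * h1 - P (s+1) (n+1) * h2
  -- Part (ratio)
  have R : ∀ (s : ℕ), s < k + 1 → ∀ n : ℤ,
      vij (n + (s : ℤ)) = v (n + (s : ℤ)) * P (s + 1) n / P s n := by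
    intro s
    induction s with
    | zero => intro _ n; simpa using hvij n
    | succ t ih =>
      intro hs n
      have h1 : vij (n + ((t+1 : ℕ) : ℤ)) = vij ((n+1) + (t : ℤ)) := by congr 1; push_cast; ring
      have h2 : v ((n+1) + (t : ℤ)) = v (n + ((t+1 : ℕ) : ℤ)) := by congr 1; push_cast; ring
      rw [h1, ih (by omega) (n+1), h2]
      have h3 : P (t+1) (n+1) / P t (n+1) = P (t+2) n / P (t+1) n := by
        rw [div_eq_div_iff (hP0 t (by omega) (n+1)) (hP0 (t+1) (by omega) n)]
        linear_combination (-1 : ℂ) * PartA n t (by omega)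
      rw [mul_div_assoc, mul_div_assoc, h3]
  -- telescoping product
  have TelAux : ∀ (j : ℕ), j ≤ k + 1 → ∀ n : ℤ,
      (∏ s ∈ Finset.range j, vij (n + s)) * P 0 n = (∏ s ∈ Finset.range j, v (n + s)) * P j n := by
    intro j
    induction j with
    | zero => intro _ n; simp
    | succ t ih =>
      intro hj n
      have hmul : vij (n + (t : ℤ)) * P t n = v (n + (t : ℤ)) * P (t+1) n := by
        rw [R t (by omega) n]
        field_simp [hP0 t (by omega) n]
      rw [Finset.prod_range_succ, Finset.prod_range_succ]
      apply mul_right_cancel₀ (hP0 t (by omega) n)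
      have h := ih (by omega) n
      linear_combination (vij (n + (t : ℤ)) * P t n) * h
        + ((∏ s ∈ Finset.range t, v (n + s)) * P t n) * hmul
  -- expansions of the relevant P's
  have hPme : ∀ n : ℤ, P (k+1) n = (αi * J n - αj * I n) * A n + αi * αj * S n := by
    intro n
    rw [hP' (k+1) n]
    simp only [hS]
    rw [Finset.mul_sum]
    congr 1
    refine Finset.sum_congr rfl fun r hr => ?_
    rw [if_neg (by have := Finset.mem_range.mp hr; omega)]
  have hP0e : ∀ n : ℤ, P 0 n = (αi * J n - αj * I n) * A n + S n := by
    intro n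
    rw [hP' 0 n]
    simp only [hS]
    congr 1
    refine Finset.sum_congr rfl fun r hr => ?_
    rw [if_pos (Nat.zero_le r), one_mul]
  have hP1e : ∀ n : ℤ, P 1 n
      = (αi * J n - αj * I n) * A n + S n + (αi * αj - 1) * T 0 n := by
    intro n
    rw [hP' 1 n]
    simp only [hS]
    rw [Finset.sum_range_succ' (fun r => (if 1 ≤ r then (1:ℂ) else αi*αj) * T r n) k]
    rw [Finset.sum_range_succ' (fun r => T r n) k]
    simp only [Nat.le_add_left  , if_pos, one_mul]
    rw [if_neg (by omega : ¬ (1:ℕ) ≤ 0)]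
    ring
  -- the two final quad equations
  have Final : ∀ n : ℤ,
      ((vij (n + ((k+1:ℕ) : ℤ)) - vj n) * ∏ s ∈ Finset.range (k+1), vij (n + s)
        = αi * (vj (n + ((k+1:ℕ) : ℤ)) - vij n) * ∏ s ∈ Finset.range (k+1), vj (n + s))
      ∧ ((vij (n + ((k+1:ℕ) : ℤ)) - vi n) * ∏ s ∈ Finset.range (k+1), vij (n + s)
        = αj * (vi (n + ((k+1:ℕ) : ℤ)) - vij n) * ∏ s ∈ Finset.range (k+1), vi (n + s)) := by
    intro n
    have ha := hv0 n
    have hp := hvi0 n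
    have hq := hvj0 n
    have hIn := hI0 n
    have hJn := hJ0 n
    have hAn := hA0 n
    have hbn := hv0 (n + ((k+1:ℕ) : ℤ))
    have hA1 : A (n+1) = A n * v (n + ((k+1 : ℕ) : ℤ)) / v n := by
      rw [eq_div_iff ha]; linear_combination hE1 n
    have hI1 : I (n+1) = I n * vi (n + ((k+1 : ℕ) : ℤ)) / vi n := by
      rw [eq_div_iff hp]; linear_combination hE2 n
    have hJ1 : J (n+1) = J n * vj (n + ((k+1 : ℕ) : ℤ)) / vj n := by
      rw [eq_div_iff hq]; linear_combination hE3 n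
    have hT0 : T 0 n = A n ^ 2 * (vi n - vj n) / v n := by
      rw [eq_div_iff ha]; linear_combination hE4 n
    have hTk : T k (n+1) = v (n + ((k+1 : ℕ) : ℤ))
        * (vi (n + ((k+1 : ℕ) : ℤ)) - vj (n + ((k+1 : ℕ) : ℤ))) * I n * J n / (vi n * vj n) := by
      rw [eq_div_iff (mul_ne_zero hp hq)]; linear_combination hE5 n
    have hS1 : S (n+1) = (v (n + ((k+1 : ℕ) : ℤ)) ^ 2 * (S n - T 0 n)
        + vi n * vj n * T k (n+1)) / (vi n * vj n) := by
      rw [eq_div_iff (mul_ne_zero hp hq)]; linear_combination hE6 n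
    have hvi' : vi (n + ((k+1 : ℕ) : ℤ))
        = v n + αi * (v (n + ((k+1 : ℕ) : ℤ)) - vi n) * A n / I n := by
      have h := hqi' n
      push_cast at h ⊢
      field_simp
      linear_combination h
    have hvj' : vj (n + ((k+1 : ℕ) : ℤ))
        = v n + αj * (v (n + ((k+1 : ℕ) : ℤ)) - vj n) * A n / J n := by
      have h := hqj' n
      push_cast at h ⊢
      field_simp
      linear_combination h
    have hPk1 : P k (n+1) = v (n + ((k+1:ℕ) : ℤ)) ^ 2 * P (k+1) n / (vi n * vj n) := by
      rw [eq_div_iff (mul_ne_zero hp hq)]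
      linear_combination (-1 : ℂ) * K3 n k le_rfl
    have hvm : vij (n + ((k+1:ℕ) : ℤ))
        = v (n + ((k+1:ℕ) : ℤ)) * P (k+1) (n+1) / P k (n+1) := by
      rw [show n + ((k+1:ℕ) : ℤ) = (n+1) + (k : ℤ) by push_cast; ring]
      exact R k (by omega) (n+1)
    have hPP : ∏ s ∈ Finset.range (k+1), vij (n + (s : ℤ)) = A n * P (k+1) n / P 0 n := by
      rw [eq_div_iff (hP0 0 (by omega) n)]
      exact TelAux (k+1) le_rfl n
    have hJeq : ∏ s ∈ Finset.range (k+1), vj (n + (s : ℤ)) = J n := by rw [hJ]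
    have hIeq : ∏ s ∈ Finset.range (k+1), vi (n + (s : ℤ)) = I n := by rw [hI]
    have hP0n : (αi * J n - αj * I n) * A n + S n ≠ 0 := by
      rw [← hP0e n]; exact hP0 0 (by omega) n
    have hPmn : (αi * J n - αj * I n) * A n + αi * αj * S n ≠ 0 := by
      rw [← hPme n]; exact hP0 (k+1) le_rfl n
    have hK3' : vi n * vj n * P k (n+1) = v (n + ((k+1:ℕ) : ℤ)) ^ 2 * P (k+1) n :=
      (K3 n k le_rfl).symm
    -- the fully expanded polynomial identities
    have dagi : (vi n * vj n * P (k+1) (n+1) - vj n * v (n + ((k+1:ℕ) : ℤ)) * P (k+1) n) * A n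
        = αi * v (n + ((k+1:ℕ) : ℤ)) * (vj (n + ((k+1:ℕ) : ℤ)) * P 0 n - v n * P 1 n) * J n := by
      rw [hPme (n+1), hPme n, hP0e n, hP1e n]
      apply mul_left_cancel₀ ha
      linear_combination ((v n) * (A n) * (αi) * (αj)) * (hE6 n)
        + ((vi n) * (vj n) * (A n) * (J (n+1)) * (αi) + (-1 : ℂ) * (vi n) * (vj n) * (A n) * (I (n+1)) * (αj)) * (hE1 n)
        + ((-1 : ℂ) * (v (n + ((k+1:ℕ) : ℤ))) * (vj n) * (A n) * (A n) * (αj)) * (hE2 n)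
        + ((v (n + ((k+1:ℕ) : ℤ))) * (vi n) * (A n) * (A n) * (αi)) * (hE3 n)
        + ((v n) * (A n) * (αi) * (αj)) * (hE5 n)
        + ((-1 : ℂ) * (v (n + ((k+1:ℕ) : ℤ))) * (v (n + ((k+1:ℕ) : ℤ))) * (A n) * (αi) * (αj) + (-1 : ℂ) * (v n) * (v (n + ((k+1:ℕ) : ℤ))) * (J n) * (αi) + (v n) * (v (n + ((k+1:ℕ) : ℤ))) * (J n) * (αi) * (αi) * (αj)) * (hE4 n)
        + ((-1 : ℂ) * (v (n + ((k+1:ℕ) : ℤ))) * (vj n) * (A n) * (A n) * (αj) + (v n) * (v (n + ((k+1:ℕ) : ℤ))) * (A n) * (J n) * (αi) * (αj)) * (hqi' n)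
        + ((v (n + ((k+1:ℕ) : ℤ))) * (vi n) * (A n) * (A n) * (αi) + (-1 : ℂ) * (v n) * (v (n + ((k+1:ℕ) : ℤ))) * (S n) * (αi) + (-1 : ℂ) * (v n) * (v (n + ((k+1:ℕ) : ℤ))) * (A n) * (J n) * (αi) * (αi)) * (hqj' n)
    have dagj : (vi n * vj n * P (k+1) (n+1) - vi n * v (n + ((k+1:ℕ) : ℤ)) * P (k+1) n) * A n
        = αj * v (n + ((k+1:ℕ) : ℤ)) * (vi (n + ((k+1:ℕ) : ℤ)) * P 0 n - v n * P 1 n) * I n := by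
      rw [hPme (n+1), hPme n, hP0e n, hP1e n]
      apply mul_left_cancel₀ ha
      linear_combination ((v n) * (A n) * (αi) * (αj)) * (hE6 n)
        + ((vi n) * (vj n) * (A n) * (J (n+1)) * (αi) + (-1 : ℂ) * (vi n) * (vj n) * (A n) * (I (n+1)) * (αj)) * (hE1 n)
        + ((-1 : ℂ) * (v (n + ((k+1:ℕ) : ℤ))) * (vj n) * (A n) * (A n) * (αj)) * (hE2 n)
        + ((v (n + ((k+1:ℕ) : ℤ))) * (vi n) * (A n) * (A n) * (αi)) * (hE3 n)
        + ((v n) * (A n) * (αi) * (αj)) * (hE5 n)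
        + ((-1 : ℂ) * (v (n + ((k+1:ℕ) : ℤ))) * (v (n + ((k+1:ℕ) : ℤ))) * (A n) * (αi) * (αj) + (-1 : ℂ) * (v n) * (v (n + ((k+1:ℕ) : ℤ))) * (I n) * (αj) + (v n) * (v (n + ((k+1:ℕ) : ℤ))) * (I n) * (αi) * (αj) * (αj)) * (hE4 n)
        + ((-1 : ℂ) * (v (n + ((k+1:ℕ) : ℤ))) * (vj n) * (A n) * (A n) * (αj) + (-1 : ℂ) * (v n) * (v (n + ((k+1:ℕ) : ℤ))) * (S n) * (αj) + (v n) * (v (n + ((k+1:ℕ) : ℤ))) * (A n) * (I n) * (αj) * (αj)) * (hqi' n)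
        + ((v (n + ((k+1:ℕ) : ℤ))) * (vi n) * (A n) * (A n) * (αi) + (-1 : ℂ) * (v n) * (v (n + ((k+1:ℕ) : ℤ))) * (A n) * (I n) * (αi) * (αj)) * (hqj' n)
    have claimi : (v (n + ((k+1:ℕ) : ℤ)) * P (k+1) (n+1) - vj n * P k (n+1)) * (A n * P (k+1) n)
        = αi * (vj (n + ((k+1:ℕ) : ℤ)) * P 0 n - v n * P 1 n) * J n * P k (n+1) := by
      apply mul_left_cancel₀ (mul_ne_zero hp hq)
      linear_combination v (n + ((k+1:ℕ) : ℤ)) * P (k+1) n * dagi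
        - (vj n * A n * P (k+1) n
            + αi * (vj (n + ((k+1:ℕ) : ℤ)) * P 0 n - v n * P 1 n) * J n) * hK3'
    have claimj : (v (n + ((k+1:ℕ) : ℤ)) * P (k+1) (n+1) - vi n * P k (n+1)) * (A n * P (k+1) n)
        = αj * (vi (n + ((k+1:ℕ) : ℤ)) * P 0 n - v n * P 1 n) * I n * P k (n+1) := by
      apply mul_left_cancel₀ (mul_ne_zero hp hq)
      linear_combination v (n + ((k+1:ℕ) : ℤ)) * P (k+1) n * dagj
        - (vi n * A n * P (k+1) n
            + αj * (vi (n + ((k+1:ℕ) : ℤ)) * P 0 n - v n * P 1 n) * I n) * hK3'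
    constructor
    · rw [hvm, hPP, hvij n, hJeq]
      push_cast at claimi ⊢
      field_simp [hP0 0 (by omega) n, hP0 k (by omega) (n+1)]
      linear_combination claimi
    · rw [hvm, hPP, hvij n, hIeq]
      push_cast at claimj ⊢
      field_simp [hP0 0 (by omega) n, hP0 k (by omega) (n+1)]
      linear_combination claimj
  exact ⟨PartA, fun n s hs => R s hs n, fun n => (Final n).1, fun n => (Final n).2⟩
end
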